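/- arXiv:2302.05575 — 6 statements merged into one kernel-verified Lean document; each statement's English description precedes it below -/
import Mathlib

section
/- Let C be a small adhesively cocomplete category. Call a presieve on an object c a *subobject covering* if all its members are monomorphisms and every monomorphism m : u ⟶ c through which all its members factor is an isomorphism. Let F : C^op ⥤ Type be a presheaf satisfying the sheaf condition (unique amalgamation of compatible families) for every sieve generated by a subobject covering. Then F satisfies the sheaf condition for every sieve generated by the set of legs of a colimit cocone of a monic C-valued structured decomposition, whenever all of these legs are monomorphisms. -/
open CategoryTheory Limits

universe w v u

/-- The objects of the category `∫G` associated to a simple graph `G`: the vertices and the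
edges of `G`. -/
inductive GObj {V : Type} (G : SimpleGraph V) : Type
  | vert : V → GObj G
  | edge : (e : Sym2 V) → e ∈ G.edgeSet → GObj G

/-- `∫G` is a thin category: besides identities, there is exactly one morphism `e ⟶ x` for
each endpoint `x` of each edge `e`.  We realise it as the category of a preorder. -/
instance GObj.instPreorder {V : Type} (G : SimpleGraph V) : Preorder (GObj G) where
  le x y :=
    match x, y with
    | .vert v, .vert w => v = w
    | .edge e _, .vert v => v ∈ e
    | .edge e _, .edge e' _ => e = e'
    | .vert _, .edge _ _ => False
  le_refl x := by cases x <;> rfl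
  le_trans x y z hxy hyz := by
    cases x <;> cases y <;> cases z <;> dsimp at * <;> first
      | exact hxy.trans hyz
      | (subst hyz; exact hxy)
      | (subst hxy; exact hyz)

/-- A submonic diagram in `C`: a diagram of shape a finite category all of whose morphisms
are monic, sending every morphism to a monomorphism of `C`. -/
structure SubmonicDiagram (C : Type u) [Category.{v} C] where
  J : Type
  [instCat : SmallCategory J]
  [instFin : FinCategory J]
  monoShape : ∀ {a b : J} (m : a ⟶ b), Mono m
  d : J ⥤ C
  monoMap : ∀ {a b : J} (m : a ⟶ b), Mono (d.map m)

attribute [instance] SubmonicDiagram.instCat SubmonicDiagram.instFin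

/-- A subobject covering of `c`: a presieve all of whose members are monomorphisms, such
that any monomorphism into `c` through which all members factor is an isomorphism (the
members are jointly maximal: their union is all of `c`). -/
def IsSubobjectCover {C : Type u} [Category.{v} C] {c : C} (S : Presieve c) : Prop :=
  (∀ ⦃Y : C⦄ (g : Y ⟶ c), S g → Mono g) ∧
  (∀ ⦃u : C⦄ (m : u ⟶ c), Mono m →
    (∀ ⦃Y : C⦄ (g : Y ⟶ c), S g → ∃ h : Y ⟶ u, h ≫ m = g) → IsIso m)

/-- In a small adhesively cocomplete category, a presheaf of types satisfying
the sheaf condition for every sieve generated by a subobject covering also satisfies the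
sheaf condition for every sieve generated by the legs of a colimit cocone of a monic
structured decomposition, provided all these legs are monomorphisms. -/
theorem stmt_6 (C : Type u) [SmallCategory C] [Adhesive C] [HasPullbacks C]
    (hcolim : ∀ D : SubmonicDiagram C, HasColimit D.d)
    (F : Cᵒᵖ ⥤ Type w)
    (hF : ∀ (c : C) (S : Presieve c), IsSubobjectCover S →
      Presieve.IsSheafFor F (Sieve.generate S).arrows)
    (c : C) (V : Type) [Fintype V] (G : SimpleGraph V) (d : GObj G ⥤ C)
    (hd : ∀ {a b : GObj G} (m : a ⟶ b), Mono (d.map m))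
    (ι : d ⟶ (Functor.const (GObj G)).obj c)
    (hcolimit : Nonempty (IsColimit (Cocone.mk c ι)))
    (hlegs : ∀ j : GObj G, Mono (ι.app j)) :
    Presieve.IsSheafFor F
      (Sieve.generate (Presieve.ofArrows d.obj fun j => ι.app j)).arrows := by
  apply hF
  constructor
  · rintro Y g ⟨j⟩
    exact hlegs j
  · intro u m hm hfac
    obtain ⟨hc⟩ := hcolimit
    choose h hh using fun j => hfac (ι.app j) (Presieve.ofArrows.mk j)
    have hnat : ∀ {a b : GObj G} (f : a ⟶ b), d.map f ≫ h b = h a := by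
      intro a b f
      rw [← cancel_mono m, Category.assoc, hh, hh]
      simpa using ι.naturality f
    let k : c ⟶ u := hc.desc ⟨u, ⟨h, by intro a b f; simpa using hnat f⟩⟩
    have hk : ∀ j, ι.app j ≫ k = h j := fun j => hc.fac _ j
    have hkm : k ≫ m = 𝟙 c := by
      apply hc.hom_ext
      intro j
      simp [← Category.assoc, hk, hh]
    exact ⟨k, by rw [← cancel_mono m, Category.assoc, hkm]; simp, hkm⟩
end

section
/- Let G be a finite tree, let e* be an edge of G with endpoints x₁ and x₂, and let T₁ and T₂ be the two connected components of G with the edge e* deleted, containing x₁ and x₂ respectively. Consider a decomposition system over G, and let M, M₁ and M₂ denote the sets of compatible families of the system over G, of its restriction to T₁, and of its restriction to T₂, respectively. Then the restriction map M → M₁ × M₂ is injective with image exactly {(s¹, s²) | f x₁ e* (s¹ x₁) = f x₂ e* (s² x₂)}; that is, M is a pullback of the maps M₁ → A e* and M₂ → A e* given by s¹ ↦ f x₁ e* (s¹ x₁) and s² ↦ f x₂ e* (s² x₂). -/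
universe u

/-- A decomposition system over a graph `G`: a bag `B v` for each vertex, an adhesion `A e`
for each edge, and for each edge `e` and endpoint `x ∈ e` a map `f x e : B x → A e`. -/
structure DecompSystem {V : Type u} (G : SimpleGraph V) where
  B : V → Type u
  A : Sym2 V → Type u
  f : ∀ (x : V) (e : Sym2 V), e ∈ G.edgeSet → x ∈ e → B x → A e

/-- A compatible family: for every edge with endpoints `x` and `y`, the images of the chosen
sections under the two adhesion maps agree. -/
def DecompSystem.Compatible {V : Type u} {G : SimpleGraph V} (D : DecompSystem G)
    (s : ∀ v, D.B v) : Prop :=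
  ∀ ⦃x y : V⦄ (h : G.Adj x y),
    D.f x s(x, y) ((G.mem_edgeSet).mpr h) (Sym2.mem_mk_left x y) (s x) =
    D.f y s(x, y) ((G.mem_edgeSet).mpr h) (Sym2.mem_mk_right x y) (s y)

/-- The set `M` of compatible families of the system. -/
def Fams {V : Type u} {G : SimpleGraph V} (D : DecompSystem G) : Type u :=
  {s : ∀ v, D.B v // D.Compatible s}

/-- Compatible families of the restriction of the system to the subgraph of `H ≤ G` induced
on a vertex set `U`. -/
def RFams {V : Type u} {G H : SimpleGraph V} (hH : H ≤ G) (D : DecompSystem G)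
    (U : Set V) : Type u :=
  {s : ∀ v : U, D.B v // ∀ (a b : U) (h : H.Adj a b),
    D.f a s(a.1, b.1) ((G.mem_edgeSet).mpr (hH h)) (Sym2.mem_mk_left a.1 b.1) (s a) =
    D.f b s(a.1, b.1) ((G.mem_edgeSet).mpr (hH h)) (Sym2.mem_mk_right a.1 b.1) (s b)}

/-- The restriction map from compatible families over `G` to compatible families of the
restricted system. -/
def restrictFam {V : Type u} {G H : SimpleGraph V} (hH : H ≤ G) (D : DecompSystem G)
    (U : Set V) (s : Fams D) : RFams hH D U :=
  ⟨fun v => s.1 v.1, fun a b h => s.2 (hH h)⟩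

private lemma f_congr {V : Type u} {G : SimpleGraph V} (D : DecompSystem G) (x : V)
    {e e' : Sym2 V} (hee : e = e') (he : e ∈ G.edgeSet) (he' : e' ∈ G.edgeSet)
    (hx : x ∈ e) (hx' : x ∈ e') (u : D.B x) :
    HEq (D.f x e he hx u) (D.f x e' he' hx' u) := by subst hee; rfl

/-- For a finite tree `G`, an edge `e* = s(x₁, x₂)`, and the two connected
components `V₁ ∋ x₁`, `V₂ ∋ x₂` of `G - e*`, the restriction map `M → M₁ × M₂` on compatible
families of a decomposition system is injective, with image exactly the pairs whose sections
at `x₁` and `x₂` are matched in the adhesion `A e*`; i.e. `M` is the pullback of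
`M₁ → A e* ← M₂`. -/
theorem stmt_8 {V : Type u} [Fintype V] {G : SimpleGraph V}
    (hconn : G.Connected) (hacyc : G.IsAcyclic)
    (x₁ x₂ : V) (hadj : G.Adj x₁ x₂) (D : DecompSystem G)
    (G' : SimpleGraph V) (hG'def : G' = G.deleteEdges {s(x₁, x₂)}) (hle : G' ≤ G)
    (V₁ V₂ : Set V)
    (hV₁ : V₁ = (G'.connectedComponentMk x₁).supp)
    (hV₂ : V₂ = (G'.connectedComponentMk x₂).supp)
    (h₁ : x₁ ∈ V₁) (h₂ : x₂ ∈ V₂) :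
    Function.Injective (fun s : Fams D => (restrictFam hle D V₁ s, restrictFam hle D V₂ s)) ∧
    Set.range (fun s : Fams D => (restrictFam hle D V₁ s, restrictFam hle D V₂ s)) =
      {p : RFams hle D V₁ × RFams hle D V₂ |
        D.f x₁ s(x₁, x₂) ((G.mem_edgeSet).mpr hadj) (Sym2.mem_mk_left x₁ x₂)
            (p.1.1 ⟨x₁, h₁⟩) =
        D.f x₂ s(x₁, x₂) ((G.mem_edgeSet).mpr hadj) (Sym2.mem_mk_right x₁ x₂)
            (p.2.1 ⟨x₂, h₂⟩)} := by
  classical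
  subst hG'def hV₁ hV₂
  -- e* is a bridge
  have hbridge : ¬(G.deleteEdges {s(x₁, x₂)}).Reachable x₁ x₂ := by
    have hb := (SimpleGraph.isAcyclic_iff_forall_adj_isBridge.mp hacyc) hadj
    rw [SimpleGraph.isBridge_iff] at hb
    exact hb
  -- V₁ and V₂ are disjoint
  have hdisj : ∀ v : V, v ∈ ((G.deleteEdges {s(x₁, x₂)}).connectedComponentMk x₁).supp →
      v ∉ ((G.deleteEdges {s(x₁, x₂)}).connectedComponentMk x₂).supp := by
    intro v hv1 hv2
    rw [SimpleGraph.ConnectedComponent.mem_supp_iff] at hv1 hv2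
    exact hbridge (SimpleGraph.ConnectedComponent.exact (hv1.symm.trans hv2))
  -- adjacency in G' keeps sides
  have hside : ∀ {a b : V}, (G.deleteEdges {s(x₁, x₂)}).Adj a b → ∀ C : (G.deleteEdges {s(x₁, x₂)}).ConnectedComponent,
      a ∈ C.supp → b ∈ C.supp := by
    intro a b hab C ha
    rw [SimpleGraph.ConnectedComponent.mem_supp_iff] at ha ⊢
    rw [← ha]
    exact (SimpleGraph.ConnectedComponent.sound hab.reachable).symm
  -- every vertex is in V₁ or V₂
  have key : ∀ (a b : V) (w : G.Walk a b),
      (a ∈ ((G.deleteEdges {s(x₁, x₂)}).connectedComponentMk x₁).supp ∨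
       a ∈ ((G.deleteEdges {s(x₁, x₂)}).connectedComponentMk x₂).supp) →
      (b ∈ ((G.deleteEdges {s(x₁, x₂)}).connectedComponentMk x₁).supp ∨
       b ∈ ((G.deleteEdges {s(x₁, x₂)}).connectedComponentMk x₂).supp) := by
    intro a b w
    induction w with
    | nil => exact id
    | @cons u c d h p ih =>
      intro ha
      apply ih
      by_cases huc : s(u, c) = s(x₁, x₂)
      · rw [Sym2.eq_iff] at huc
        rcases huc with ⟨rfl, rfl⟩ | ⟨rfl, rfl⟩
        · exact Or.inr h₂
        · exact Or.inl h₁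
      · have hadj' : (G.deleteEdges {s(x₁, x₂)}).Adj u c := by
          rw [SimpleGraph.deleteEdges_adj]
          exact ⟨h, by simpa using huc⟩
        rcases ha with ha | ha
        · exact Or.inl (hside hadj' _ ha)
        · exact Or.inr (hside hadj' _ ha)
  have hcover : ∀ v : V, v ∈ ((G.deleteEdges {s(x₁, x₂)}).connectedComponentMk x₁).supp ∨
      v ∈ ((G.deleteEdges {s(x₁, x₂)}).connectedComponentMk x₂).supp := by
    intro v
    obtain ⟨w⟩ := hconn x₁ v
    exact key x₁ v w (Or.inl h₁)
  constructor
  · intro s t hst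
    have h1 := congrArg Prod.fst hst
    have h2 := congrArg Prod.snd hst
    simp only [restrictFam] at h1 h2
    apply Subtype.ext
    funext v
    rcases hcover v with hv | hv
    · exact congrFun (congrArg Subtype.val h1) ⟨v, hv⟩
    · exact congrFun (congrArg Subtype.val h2) ⟨v, hv⟩
  · ext p
    constructor
    · rintro ⟨s, rfl⟩
      exact s.2 hadj
    · intro hp
      have hmem2 : ∀ v : V, v ∉ ((G.deleteEdges {s(x₁, x₂)}).connectedComponentMk x₁).supp →
          v ∈ ((G.deleteEdges {s(x₁, x₂)}).connectedComponentMk x₂).supp := fun v hv =>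
        (hcover v).resolve_left hv
      set s : ∀ v, D.B v := fun v =>
        if h : v ∈ ((G.deleteEdges {s(x₁, x₂)}).connectedComponentMk x₁).supp then p.1.1 ⟨v, h⟩
        else p.2.1 ⟨v, hmem2 v h⟩ with hs
      have hx2not : x₂ ∉ ((G.deleteEdges {s(x₁, x₂)}).connectedComponentMk x₁).supp := fun h =>
        hdisj x₂ h h₂
      have hsv1 : ∀ (v : V) (hv : v ∈ ((G.deleteEdges {s(x₁, x₂)}).connectedComponentMk x₁).supp),
          s v = p.1.1 ⟨v, hv⟩ := by
        intro v hv; simp only [hs, dif_pos hv]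
      have hsv2 : ∀ (v : V) (hv : v ∈ ((G.deleteEdges {s(x₁, x₂)}).connectedComponentMk x₂).supp),
          s v = p.2.1 ⟨v, hv⟩ := by
        intro v hv
        have hv1 : v ∉ ((G.deleteEdges {s(x₁, x₂)}).connectedComponentMk x₁).supp := fun h =>
          hdisj v h hv
        simp only [hs, dif_neg hv1]
      have hcompat : D.Compatible s := by
        intro a b hab
        by_cases hab' : s(a, b) = s(x₁, x₂)
        · rw [Sym2.eq_iff] at hab'
          rcases hab' with ⟨rfl, rfl⟩ | ⟨rfl, rfl⟩
          · rw [hsv1 a h₁, hsv2 b h₂]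
            exact hp
          · rw [hsv2 a h₂, hsv1 b h₁]
            exact eq_of_heq (HEq.trans
              (f_congr D a Sym2.eq_swap ((G.mem_edgeSet).mpr hab) ((G.mem_edgeSet).mpr hadj)
                (Sym2.mem_mk_left a b) (Sym2.mem_mk_right b a) (p.2.1 ⟨a, h₂⟩))
              (HEq.trans (heq_of_eq (Eq.symm hp))
                (f_congr D b Sym2.eq_swap ((G.mem_edgeSet).mpr hadj) ((G.mem_edgeSet).mpr hab)
                  (Sym2.mem_mk_left b a) (Sym2.mem_mk_right a b) (p.1.1 ⟨b, h₁⟩))))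
        · have hGadj : (G.deleteEdges {s(x₁, x₂)}).Adj a b := by
            rw [SimpleGraph.deleteEdges_adj]
            exact ⟨hab, by simpa using hab'⟩
          by_cases ha1 : a ∈ ((G.deleteEdges {s(x₁, x₂)}).connectedComponentMk x₁).supp
          · have hb1 := hside hGadj _ ha1
            rw [hsv1 a ha1, hsv1 b hb1]
            exact p.1.2 ⟨a, ha1⟩ ⟨b, hb1⟩ hGadj
          · have ha2 := hmem2 a ha1
            have hb2 := hside hGadj _ ha2
            rw [hsv2 a ha2, hsv2 b hb2]
            exact p.2.2 ⟨a, ha2⟩ ⟨b, hb2⟩ hGadj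
      refine ⟨⟨s, hcompat⟩, ?_⟩
      have hp1 : restrictFam hle D _ ⟨s, hcompat⟩ = p.1 := by
        apply Subtype.ext; funext v
        exact (hsv1 v.1 v.2).trans (by congr)
      have hp2 : restrictFam hle D _ ⟨s, hcompat⟩ = p.2 := by
        apply Subtype.ext; funext v
        exact (hsv2 v.1 v.2).trans (by congr)
      exact Prod.ext hp1 hp2
end

section
/- Let G be a finite tree rooted at a vertex r, and consider a decomposition system over G. Define the *edge filter* at an edge e with endpoints x and y to be the operation replacing the current bag B x by {s ∈ B x | ∃ t ∈ B y, f x e s = f y e t} and the current bag B y by {t ∈ B y | ∃ s ∈ B x, f x e s = f y e t}, leaving all other bags unchanged. Process every edge of G exactly once, in any order in which each edge is processed only after all edges lying strictly below it (i.e., all edges of the subtree hanging from its endpoint farther from r) have been processed, applying each filter to the current bags. Then the resulting final bag B* r at the root equals {b ∈ B r | there exists a compatible family s of the original system with s r = b}; in particular, the original system has a compatible family if and only if B* r is nonempty. -/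
universe u

/-- The edge filter at the edge `xy`: the current bag at `x` is cut down to those sections
having a matching partner in the current bag at `y`, and vice versa; all other bags are
unchanged. -/
def filterStep {V : Type u} {G : SimpleGraph V} (D : DecompSystem G) (x y : V)
    (P : ∀ v, Set (D.B v)) : ∀ v, Set (D.B v) := fun v =>
  {s | s ∈ P v ∧
    (∀ (hv : v = x) (h : G.Adj x y), ∃ t ∈ P y,
      D.f x s(x, y) ((G.mem_edgeSet).mpr h) (Sym2.mem_mk_left x y) (hv ▸ s) =
      D.f y s(x, y) ((G.mem_edgeSet).mpr h) (Sym2.mem_mk_right x y) t) ∧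
    (∀ (hv : v = y) (h : G.Adj x y), ∃ t ∈ P x,
      D.f x s(x, y) ((G.mem_edgeSet).mpr h) (Sym2.mem_mk_left x y) t =
      D.f y s(x, y) ((G.mem_edgeSet).mpr h) (Sym2.mem_mk_right x y) (hv ▸ s))}

/-! ### Auxiliary tree-metric lemmas -/

section TreeAux

set_option linter.unusedSectionVars false

variable {V : Type u} [DecidableEq V] {G : SimpleGraph V}

/-- Unique neighbor of `u` strictly closer to `w`, in an acyclic connected graph. -/
lemma aux_U (hconn : G.Connected) (hacyc : G.IsAcyclic) {u w c c' : V}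
    (h : G.Adj u c) (h' : G.Adj u c') (hd : G.dist c w + 1 = G.dist u w)
    (hd' : G.dist c' w + 1 = G.dist u w) : c = c' := by
  obtain ⟨q, hq, hql⟩ := hconn.exists_path_of_dist c w
  obtain ⟨q', hq', hql'⟩ := hconn.exists_path_of_dist c' w
  have hu : u ∉ q.support := by
    intro hu
    have h1 := SimpleGraph.Walk.length_dropUntil_le q hu
    have h2 := SimpleGraph.dist_le (q.dropUntil u hu)
    omega
  have hu' : u ∉ q'.support := by
    intro hu'
    have h1 := SimpleGraph.Walk.length_dropUntil_le q' hu'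
    have h2 := SimpleGraph.dist_le (q'.dropUntil u hu')
    omega
  have hp1 : (q.cons h).IsPath := hq.cons hu
  have hp2 : (q'.cons h').IsPath := hq'.cons hu'
  have heq := hacyc.path_unique ⟨q.cons h, hp1⟩ ⟨q'.cons h', hp2⟩
  have hw : q.cons h = q'.cons h' := congrArg Subtype.val heq
  have hsupp := congrArg SimpleGraph.Walk.support hw
  rw [SimpleGraph.Walk.support_cons, SimpleGraph.Walk.support_cons] at hsupp
  have h3 : q.support = q'.support := by injection hsupp
  have h4 := congrArg List.head? h3
  rw [SimpleGraph.Walk.support_eq_cons q, SimpleGraph.Walk.support_eq_cons q'] at h4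
  exact Option.some.inj h4

lemma aux_parent_exists (hconn : G.Connected) {r v : V} (hv : v ≠ r) :
    ∃ p, G.Adj p v ∧ G.dist r v = G.dist r p + 1 := by
  have hd0 : 0 < G.dist v r := hconn.pos_dist_of_ne hv
  obtain ⟨wlk, hwl⟩ := hconn.exists_walk_length_eq_dist v r
  cases wlk with
  | nil => simp at hwl; exact absurd rfl hv
  | @cons _ b _ h q =>
    refine ⟨b, h.symm, ?_⟩
    have h1 : G.dist b r ≤ q.length := SimpleGraph.dist_le q
    have h2 : G.dist r v ≤ G.dist r b + G.dist b v := hconn.dist_triangle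
    have h3 : G.dist b v = 1 := SimpleGraph.dist_eq_one_iff_adj.mpr h.symm
    have h4 : G.dist r v = G.dist v r := SimpleGraph.dist_comm
    have h5 : G.dist r b = G.dist b r := SimpleGraph.dist_comm
    simp only [SimpleGraph.Walk.length_cons] at hwl
    omega

lemma aux_child_exists (hconn : G.Connected) {r v w : V} (hvw : v ≠ w)
    (hdown : G.dist r w = G.dist r v + G.dist v w) :
    ∃ c, G.Adj v c ∧ G.dist r c = G.dist r v + 1 ∧
      G.dist r w = G.dist r c + G.dist c w ∧ G.dist v w = G.dist c w + 1 := by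
  have hd0 : 0 < G.dist v w := hconn.pos_dist_of_ne hvw
  obtain ⟨wlk, hwl⟩ := hconn.exists_walk_length_eq_dist v w
  cases wlk with
  | nil => simp at hwl; omega
  | @cons _ c _ h q =>
    have h1 : G.dist c w ≤ q.length := SimpleGraph.dist_le q
    have h2 : G.dist v w ≤ G.dist v c + G.dist c w := hconn.dist_triangle
    have h3 : G.dist v c = 1 := SimpleGraph.dist_eq_one_iff_adj.mpr h
    have h4 : G.dist r c ≤ G.dist r v + G.dist v c := hconn.dist_triangle
    have h5 : G.dist r w ≤ G.dist r c + G.dist c w := hconn.dist_triangle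
    simp only [SimpleGraph.Walk.length_cons] at hwl
    exact ⟨c, h, by omega, by omega, by omega⟩

lemma aux_child_unique (hconn : G.Connected) (hacyc : G.IsAcyclic) {r v w c c' : V}
    (hc : G.Adj v c) (h1 : G.dist r c = G.dist r v + 1)
    (h2 : G.dist r w = G.dist r c + G.dist c w)
    (hc' : G.Adj v c') (h1' : G.dist r c' = G.dist r v + 1)
    (h2' : G.dist r w = G.dist r c' + G.dist c' w) : c = c' := by
  have t1 : G.dist v w ≤ G.dist v c + G.dist c w := hconn.dist_triangle
  have t1' : G.dist v w ≤ G.dist v c' + G.dist c' w := hconn.dist_triangle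
  have t2 : G.dist r w ≤ G.dist r v + G.dist v w := hconn.dist_triangle
  have t3 : G.dist v c = 1 := SimpleGraph.dist_eq_one_iff_adj.mpr hc
  have t3' : G.dist v c' = 1 := SimpleGraph.dist_eq_one_iff_adj.mpr hc'
  exact aux_U (w := w) hconn hacyc hc hc' (by omega) (by omega)

lemma aux_parent_unique (hconn : G.Connected) (hacyc : G.IsAcyclic) {r v p p' : V}
    (hp : G.Adj p v) (h1 : G.dist r v = G.dist r p + 1)
    (hp' : G.Adj p' v) (h1' : G.dist r v = G.dist r p' + 1) : p = p' := by
  have c1 : G.dist p r = G.dist r p := SimpleGraph.dist_comm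
  have c2 : G.dist p' r = G.dist r p' := SimpleGraph.dist_comm
  have c3 : G.dist v r = G.dist r v := SimpleGraph.dist_comm
  exact aux_U (w := r) hconn hacyc hp.symm hp'.symm (by omega) (by omega)

lemma aux_adj_orient (hconn : G.Connected) (hacyc : G.IsAcyclic) (r : V) {x y : V}
    (h : G.Adj x y) :
    G.dist r y = G.dist r x + 1 ∨ G.dist r x = G.dist r y + 1 := by
  have hxy : G.dist x y = 1 := SimpleGraph.dist_eq_one_iff_adj.mpr h
  have hyx : G.dist y x = 1 := SimpleGraph.dist_eq_one_iff_adj.mpr h.symm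
  have t1 : G.dist r y ≤ G.dist r x + G.dist x y := hconn.dist_triangle
  have t2 : G.dist r x ≤ G.dist r y + G.dist y x := hconn.dist_triangle
  have hne : G.dist r x ≠ G.dist r y := by
    intro heq
    obtain ⟨P, hP, hPl⟩ := hconn.exists_path_of_dist r x
    have hy : y ∉ P.support := by
      intro hy
      have hs := SimpleGraph.Walk.take_spec P hy
      have hlen := congrArg SimpleGraph.Walk.length hs
      rw [SimpleGraph.Walk.length_append] at hlen
      have d1 := SimpleGraph.dist_le (P.takeUntil y hy)
      have d2 := SimpleGraph.dist_le (P.dropUntil y hy)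
      omega
    have hrev : (P.reverse.cons h.symm).IsPath := by
      refine (hP.reverse).cons ?_
      rwa [SimpleGraph.Walk.support_reverse, List.mem_reverse]
    obtain ⟨Q, hQ, hQl⟩ := hconn.exists_path_of_dist y r
    have heqp := hacyc.path_unique ⟨P.reverse.cons h.symm, hrev⟩ ⟨Q, hQ⟩
    have hwq : P.reverse.cons h.symm = Q := congrArg Subtype.val heqp
    have hlq := congrArg SimpleGraph.Walk.length hwq
    rw [SimpleGraph.Walk.length_cons, SimpleGraph.Walk.length_reverse] at hlq
    have c3 : G.dist y r = G.dist r y := SimpleGraph.dist_comm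
    omega
  omega

lemma aux_dist_lt_card [Fintype V] (hconn : G.Connected) (r w : V) :
    G.dist r w < Fintype.card V := by
  obtain ⟨P, hP, hPl⟩ := hconn.exists_path_of_dist r w
  have := hP.length_lt
  omega

end TreeAux

/-! ### Auxiliary lemmas about `filterStep` -/

section FoldAux

variable {V : Type u} {G : SimpleGraph V}

lemma filterStep_subset (D : DecompSystem G) (x y : V) (P : ∀ v, Set (D.B v)) (v : V) :
    filterStep D x y P v ⊆ P v := fun _ hs => hs.1

lemma filterStep_other (D : DecompSystem G) (x y : V) (P : ∀ v, Set (D.B v)) (v : V)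
    (hx : v ≠ x) (hy : v ≠ y) : filterStep D x y P v = P v := by
  ext s
  exact ⟨fun hs => hs.1, fun hs => ⟨hs, fun hv => absurd hv hx, fun hv => absurd hv hy⟩⟩

lemma aux_flip (D : DecompSystem G) {x y : V} (h : G.Adj x y) (sx : D.B x) (sy : D.B y)
    (hyp : D.f y s(y, x) ((G.mem_edgeSet).mpr h.symm) (Sym2.mem_mk_left y x) sy =
      D.f x s(y, x) ((G.mem_edgeSet).mpr h.symm) (Sym2.mem_mk_right y x) sx) :
    D.f x s(x, y) ((G.mem_edgeSet).mpr h) (Sym2.mem_mk_left x y) sx =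
      D.f y s(x, y) ((G.mem_edgeSet).mpr h) (Sym2.mem_mk_right x y) sy := by
  have gen : ∀ (e : Sym2 V), s(y, x) = e → ∀ (hee : e ∈ G.edgeSet) (hx : x ∈ e) (hy : y ∈ e),
      D.f x e hee hx sx = D.f y e hee hy sy := by
    rintro e rfl hee hx hy
    exact hyp.symm
  exact gen s(x, y) Sym2.eq_swap _ _ _

end FoldAux

/-- Let `G` be a finite tree rooted at `r`, and let `ℓ` be a list of the edges
of `G` (oriented away from the root, each edge occurring exactly once) in any order such
that each edge appears only after all edges lying strictly below it, i.e. all edges of the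
subtree hanging from its endpoint farther from `r`. Then applying the edge filters along
`ℓ`, starting from the full bags, yields at the root exactly the set of sections extending
to a compatible family of the original system; in particular there is a compatible family
iff the final root bag is nonempty. -/
theorem stmt_9 {V : Type u} [Fintype V] {G : SimpleGraph V}
    (hconn : G.Connected) (hacyc : G.IsAcyclic) (r : V)
    (D : DecompSystem G) (ℓ : List (V × V))
    -- every entry of `ℓ` is an edge of `G`, oriented away from the root `r`
    (horient : ∀ pc ∈ ℓ, G.Adj pc.1 pc.2 ∧ G.dist r pc.2 = G.dist r pc.1 + 1)
    -- `ℓ` contains every edge of `G` exactly once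
    (hnodup : (ℓ.map fun pc => s(pc.1, pc.2)).Nodup)
    (hcover : ∀ e : Sym2 V, e ∈ ℓ.map (fun pc => s(pc.1, pc.2)) ↔ e ∈ G.edgeSet)
    -- each edge is processed only after all edges strictly below it: if the edge at
    -- position `j` lies in the subtree hanging from the far endpoint of the edge at
    -- position `i`, then `j < i`
    (horder : ∀ i j : Fin ℓ.length,
      G.dist r (ℓ.get j).2 = G.dist r (ℓ.get i).2 + G.dist (ℓ.get i).2 (ℓ.get j).2 →
      (ℓ.get j).2 ≠ (ℓ.get i).2 → (j : ℕ) < (i : ℕ)) :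
    (ℓ.foldl (fun P pc => filterStep D pc.1 pc.2 P) (fun v => (Set.univ : Set (D.B v)))) r =
      {b : D.B r | ∃ s : ∀ v, D.B v, D.Compatible s ∧ s r = b} := by
  classical
  set F : (∀ v, Set (D.B v)) → (V × V) → (∀ v, Set (D.B v)) :=
    fun P pc => filterStep D pc.1 pc.2 P with hF
  set init : ∀ v, Set (D.B v) := fun v => (Set.univ : Set (D.B v)) with hinit
  set S : ℕ → ∀ v, Set (D.B v) := fun n => (ℓ.take n).foldl F init with hSdef
  have hS0 : ℓ.foldl F init = S ℓ.length := by
    simp only [hSdef, List.take_length]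
  have hS_succ : ∀ (n : ℕ) (hn : n < ℓ.length), S (n + 1) = F (S n) (ℓ.get ⟨n, hn⟩) := by
    intro n hn
    have ht : ℓ.take (n + 1) = ℓ.take n ++ [ℓ.get ⟨n, hn⟩] := by
      rw [List.take_succ]
      congr 1
      rw [List.getElem?_eq_getElem hn]
      simp [List.get_eq_getElem]
    simp only [hSdef, ht, List.foldl_append, List.foldl_cons, List.foldl_nil]
  have hS_mono : ∀ (m n : ℕ), m ≤ n → n ≤ ℓ.length → ∀ v, S n v ⊆ S m v := by
    intro m n
    induction n with
    | zero =>
      intro h1 _ v s hs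
      have hm0 : m = 0 := Nat.le_zero.mp h1
      rw [hm0]; exact hs
    | succ k ih =>
      intro h1 h2 v
      rcases Nat.lt_or_ge m (k + 1) with hlt | hge
      · have hk : k < ℓ.length := by omega
        have hstep : S (k + 1) v ⊆ S k v := by
          rw [hS_succ k hk]
          simp only [hF]
          exact filterStep_subset _ _ _ _ _
        exact fun s hs => ih (by omega) (by omega) v (hstep hs)
      · have hmk : m = k + 1 := by omega
        intro s hs; rw [hmk]; exact hs
  -- every oriented edge of `G` occurs in `ℓ`
  have hidx : ∀ p c : V, G.Adj p c → G.dist r c = G.dist r p + 1 →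
      ∃ i : Fin ℓ.length, ℓ.get i = (p, c) := by
    intro p c hpc hdc
    have he : s(p, c) ∈ G.edgeSet := (G.mem_edgeSet).mpr hpc
    obtain ⟨pc, hmem, hs2⟩ := List.mem_map.mp ((hcover _).mpr he)
    have hpcc : pc = (p, c) := by
      rcases Sym2.eq_iff.mp hs2 with ⟨h1, h2⟩ | ⟨h1, h2⟩
      · exact Prod.ext h1 h2
      · exfalso
        have h3 := (horient pc hmem).2
        rw [h1, h2] at h3
        omega
    rw [hpcc] at hmem
    exact List.mem_iff_get.mp hmem
  -- each vertex is the lower endpoint of at most one entry of `ℓ`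
  have huniq : ∀ i j : Fin ℓ.length, (ℓ.get i).2 = (ℓ.get j).2 → i = j := by
    intro i j hij
    have hgi := horient (ℓ.get i) (List.get_mem ℓ i)
    have hgj := horient (ℓ.get j) (List.get_mem ℓ j)
    have hp : (ℓ.get i).1 = (ℓ.get j).1 :=
      aux_parent_unique hconn hacyc hgi.1 hgi.2 (hij.symm ▸ hgj.1) (hij.symm ▸ hgj.2)
    have hℓnd : ℓ.Nodup := hnodup.of_map
    exact (hℓnd.get_inj_iff).mp (Prod.ext hp hij)
  -- stability of the state at `c` after the edge into `c` has been processed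
  have hstab : ∀ (c : V) (i : Fin ℓ.length), (ℓ.get i).2 = c →
      ∀ m, i.1 + 1 ≤ m → m ≤ ℓ.length → S m c = S (i.1 + 1) c := by
    intro c i hic m
    induction m with
    | zero => intro h1 _; omega
    | succ k ih =>
      intro hm1 hm2
      rcases Nat.lt_or_ge (i.1 + 1) (k + 1) with hlt | hge
      · have hk : k < ℓ.length := by omega
        have hrec : S k c = S (i.1 + 1) c := ih (by omega) (by omega)
        have hek := horient (ℓ.get ⟨k, hk⟩) (List.get_mem ℓ ⟨k, hk⟩)
        have hne1 : c ≠ (ℓ.get ⟨k, hk⟩).1 := by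
          intro hc
          have hd1 : G.dist (ℓ.get ⟨k, hk⟩).1 (ℓ.get ⟨k, hk⟩).2 = 1 :=
            SimpleGraph.dist_eq_one_iff_adj.mpr hek.1
          have hlt2 := horder i ⟨k, hk⟩
            (by rw [hic, hc, hd1]; exact hek.2)
            (by intro heq
                have h5 := hek.2
                rw [heq, hic, hc] at h5
                omega)
          have hlt3 : k < i.1 := hlt2
          omega
        have hne2 : c ≠ (ℓ.get ⟨k, hk⟩).2 := by
          intro hc
          have hik : i = ⟨k, hk⟩ := huniq i ⟨k, hk⟩ (by rw [hic, hc])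
          have : i.1 = k := by rw [hik]
          omega
        calc S (k + 1) c = S k c := by
              rw [hS_succ k hk]
              simp only [hF]
              exact filterStep_other D _ _ _ c hne1 hne2
          _ = S (i.1 + 1) c := hrec
      · have hk1 : k + 1 = i.1 + 1 := by omega
        rw [hk1]
  -- the key induction: surviving sections extend to compatible families on subtrees
  have key : ∀ (n : ℕ) (v : V), Fintype.card V - G.dist r v = n →
      ∀ b, b ∈ S ℓ.length v →
      ∃ s : (∀ w, G.dist r w = G.dist r v + G.dist v w → D.B w),
        s v (by simp [SimpleGraph.dist_self]) = b ∧
        ∀ (p c : V) (h : G.Adj p c), G.dist r c = G.dist r p + 1 →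
          ∀ (hp : G.dist r p = G.dist r v + G.dist v p)
            (hc : G.dist r c = G.dist r v + G.dist v c),
          D.f p s(p, c) ((G.mem_edgeSet).mpr h) (Sym2.mem_mk_left p c) (s p hp) =
          D.f c s(p, c) ((G.mem_edgeSet).mpr h) (Sym2.mem_mk_right p c) (s c hc) := by
    intro n
    induction n using Nat.strong_induction_on with
    | _ n IH =>
    intro v hn b hb
    -- for each child `c` of `v`, a compatible family matching `b` on the subtree of `c`
    have hchild : ∀ c : V, ∀ (hvc : G.Adj v c), G.dist r c = G.dist r v + 1 →
        ∃ s : (∀ w, G.dist r w = G.dist r c + G.dist c w → D.B w),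
          D.f v s(v, c) ((G.mem_edgeSet).mpr hvc) (Sym2.mem_mk_left v c) b =
            D.f c s(v, c) ((G.mem_edgeSet).mpr hvc) (Sym2.mem_mk_right v c)
              (s c (by simp [SimpleGraph.dist_self])) ∧
          ∀ (p q : V) (h : G.Adj p q), G.dist r q = G.dist r p + 1 →
            ∀ (hp : G.dist r p = G.dist r c + G.dist c p)
              (hq : G.dist r q = G.dist r c + G.dist c q),
            D.f p s(p, q) ((G.mem_edgeSet).mpr h) (Sym2.mem_mk_left p q) (s p hp) =
            D.f q s(p, q) ((G.mem_edgeSet).mpr h) (Sym2.mem_mk_right p q) (s q hq) := by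
      intro c hvc hdc
      have hcv : c ≠ v := by intro hcc; rw [hcc] at hdc; omega
      obtain ⟨i, hi⟩ := hidx v c hvc hdc
      have hilt := i.isLt
      have hi' : ℓ.get ⟨i.1, i.isLt⟩ = (v, c) := hi
      have hb1 : b ∈ S (i.1 + 1) v := hS_mono (i.1 + 1) ℓ.length (by omega) le_rfl v hb
      rw [hS_succ i.1 i.isLt, hi'] at hb1
      simp only [hF, filterStep, Set.mem_setOf_eq] at hb1
      obtain ⟨hbv, hcondx, -⟩ := hb1
      obtain ⟨t, htP, hmatch⟩ := hcondx trivial hvc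
      have ht2 : t ∈ S (i.1 + 1) c := by
        rw [hS_succ i.1 i.isLt, hi']
        simp only [hF, filterStep, Set.mem_setOf_eq]
        refine ⟨htP, ?_, ?_⟩
        · intro hv' _; exact absurd hv' hcv
        · intro hv' h'; exact ⟨b, hbv, hmatch⟩
      have ht3 : t ∈ S ℓ.length c := by
        have hstabc := hstab c i (by rw [hi]) ℓ.length (by omega) le_rfl
        rw [hstabc]; exact ht2
      have hcard := aux_dist_lt_card hconn r c
      obtain ⟨s, hs1, hs2⟩ := IH (Fintype.card V - G.dist r c) (by omega) c rfl t ht3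
      exact ⟨s, hmatch.trans (congrArg
        (D.f c s(v, c) ((G.mem_edgeSet).mpr hvc) (Sym2.mem_mk_right v c)) hs1.symm), hs2⟩
    choose sc hsc1 hsc2 using hchild
    -- the unique child below which a strictly lower vertex lies
    have hex : ∀ w, G.dist r w = G.dist r v + G.dist v w → ∀ _ : w ≠ v,
        ∃ c, (G.Adj v c ∧ G.dist r c = G.dist r v + 1) ∧
          G.dist r w = G.dist r c + G.dist c w := by
      intro w hw hne
      obtain ⟨c, h1, h2, h3, -⟩ := aux_child_exists hconn (Ne.symm hne) hw
      exact ⟨c, ⟨h1, h2⟩, h3⟩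
    choose ch hchP hchD using hex
    have scongr : ∀ (c c' : V), c = c' → ∀ (h1 : G.Adj v c) (h2 : G.dist r c = G.dist r v + 1)
        (w : V) (h3 : G.dist r w = G.dist r c + G.dist c w) (h1' : G.Adj v c')
        (h2' : G.dist r c' = G.dist r v + 1) (h3' : G.dist r w = G.dist r c' + G.dist c' w),
        sc c h1 h2 w h3 = sc c' h1' h2' w h3' := by
      rintro c c' rfl h1 h2 w h3 h1' h2' h3'
      rfl
    set sfun : ∀ w, G.dist r w = G.dist r v + G.dist v w → D.B w := fun w hw =>
      if h : w = v then h.symm ▸ b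
      else sc (ch w hw h) (hchP w hw h).1 (hchP w hw h).2 w (hchD w hw h) with hsfun
    have sval_v : ∀ (hw : G.dist r v = G.dist r v + G.dist v v), sfun v hw = b := by
      intro hw
      simp only [hsfun]
      exact dif_pos trivial
    have sval_child : ∀ (w : V) (hw : G.dist r w = G.dist r v + G.dist v w) (hne : w ≠ v),
        sfun w hw = sc (ch w hw hne) (hchP w hw hne).1 (hchP w hw hne).2 w (hchD w hw hne) := by
      intro w hw hne
      simp only [hsfun]
      rw [dif_neg hne]
    refine ⟨sfun, sval_v _, ?_⟩
    intro p c hadj ho hp hc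
    by_cases hpv : p = v
    · subst hpv
      have hcvne : c ≠ p := by intro hcc; rw [hcc] at ho; omega
      have hch_eq : ch c hc hcvne = c :=
        aux_child_unique hconn hacyc (hchP c hc hcvne).1 (hchP c hc hcvne).2 (hchD c hc hcvne)
          hadj ho (by simp [SimpleGraph.dist_self])
      have e2 : sfun c hc = sc c hadj ho c (by simp [SimpleGraph.dist_self]) := by
        rw [sval_child c hc hcvne]
        exact scongr _ _ hch_eq _ _ _ _ _ _ _
      rw [sval_v hp, e2]
      exact hsc1 c hadj ho
    · have hPu := hchP p hp hpv
      have hDu := hchD p hp hpv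
      have hDuc : G.dist r c = G.dist r (ch p hp hpv) + G.dist (ch p hp hpv) c := by
        have t1 : G.dist r c ≤ G.dist r (ch p hp hpv) + G.dist (ch p hp hpv) c :=
          hconn.dist_triangle
        have t2 : G.dist (ch p hp hpv) c ≤ G.dist (ch p hp hpv) p + G.dist p c :=
          hconn.dist_triangle
        have t3 : G.dist p c = 1 := SimpleGraph.dist_eq_one_iff_adj.mpr hadj
        omega
      have hcv : c ≠ v := by intro hcc; rw [hcc] at ho; omega
      have e2 : sfun c hc = sc (ch p hp hpv) hPu.1 hPu.2 c hDuc := by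
        rw [sval_child c hc hcv]
        exact scongr _ _
          (aux_child_unique hconn hacyc (hchP c hc hcv).1 (hchP c hc hcv).2 (hchD c hc hcv)
            hPu.1 hPu.2 hDuc) _ _ _ _ _ _ _
      rw [sval_child p hp hpv, e2]
      exact hsc2 (ch p hp hpv) hPu.1 hPu.2 p c hadj ho hDu hDuc
  -- conclude
  ext b
  simp only [Set.mem_setOf_eq]
  constructor
  · intro hb
    have hb' : b ∈ S ℓ.length r := by rw [← hS0]; exact hb
    obtain ⟨s, hs1, hs2⟩ := key (Fintype.card V - G.dist r r) r rfl b hb'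
    have hall : ∀ w, G.dist r w = G.dist r r + G.dist r w := by
      intro w; simp [SimpleGraph.dist_self]
    refine ⟨fun w => s w (hall w), ?_, hs1⟩
    intro x y hxy
    rcases aux_adj_orient hconn hacyc r hxy with hor | hor
    · exact hs2 x y hxy hor (hall x) (hall y)
    · exact aux_flip D hxy _ _ (hs2 y x hxy.symm hor (hall y) (hall x))
  · rintro ⟨s, hcomp, hsr⟩
    subst hsr
    have inv : ∀ (L : List (V × V)) (P : ∀ v, Set (D.B v)),
        (∀ w, s w ∈ P w) → ∀ w, s w ∈ (L.foldl F P) w := by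
      intro L
      induction L with
      | nil => intro P hP w; exact hP w
      | cons e L ih =>
        intro P hP w
        apply ih
        intro w'
        refine ⟨hP w', ?_, ?_⟩
        · intro hv h; exact ⟨s e.2, hP e.2, by cases hv; exact hcomp h⟩
        · intro hv h; exact ⟨s e.1, hP e.1, by cases hv; exact hcomp h⟩
    exact inv ℓ init (fun w => by simp [hinit]) r
end

section
/- Let G be a finite simple graph and consider a decomposition system over G. Let x be a vertex whose bag is a singleton, B x = {ξ}. Let G' be the graph obtained from G by deleting all edges incident with x, and consider the decomposition system over G' that keeps the same adhesions and maps for the remaining edges and the same bags, except that for every vertex y joined to x in G by an edge e, the bag B y is replaced by {t ∈ B y | f y e t = f x e ξ}. Then the original system over G has a compatible family if and only if the reduced system over G' has a compatible family. -/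
universe u

theorem aux_swap {V : Type u} {G : SimpleGraph V} (D : DecompSystem G) {a b : V}
    (h : G.Adj a b) (ta : D.B a) (tb : D.B b)
    (hh : D.f a s(a, b) ((G.mem_edgeSet).mpr h) (Sym2.mem_mk_left a b) ta =
          D.f b s(a, b) ((G.mem_edgeSet).mpr h) (Sym2.mem_mk_right a b) tb) :
    D.f b s(b, a) ((G.mem_edgeSet).mpr h.symm) (Sym2.mem_mk_left b a) tb =
    D.f a s(b, a) ((G.mem_edgeSet).mpr h.symm) (Sym2.mem_mk_right b a) ta := by
  have key : ∀ (e : Sym2 V), e = s(a, b) → ∀ (hE : e ∈ G.edgeSet) (hbe : b ∈ e) (hae : a ∈ e),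
      D.f b e hE hbe tb = D.f a e hE hae ta := by
    rintro e rfl hE hbe hae
    exact hh.symm
  exact key _ Sym2.eq_swap _ _ _

/-- If the bag at `x` is a singleton `{ξ}`, then the system over `G` has a
compatible family iff the reduced system over `G' = G` minus all edges incident with `x`
(with the bag of each `G`-neighbour `y` of `x` cut down to the sections matching `ξ` across
the edge `xy`) has a compatible family. -/
theorem stmt_10 {V : Type u} {G : SimpleGraph V} (D : DecompSystem G)
    (x : V) (ξ : D.B x) (hsing : ∀ b : D.B x, b = ξ)
    (G' : SimpleGraph V) (hG'def : G' = G.deleteEdges (G.incidenceSet x)) (hle : G' ≤ G) :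
    (∃ s : ∀ v, D.B v, D.Compatible s) ↔
    (∃ s : ∀ v, D.B v,
      (∀ ⦃a b : V⦄ (h : G'.Adj a b),
        D.f a s(a, b) ((G.mem_edgeSet).mpr (hle h)) (Sym2.mem_mk_left a b) (s a) =
        D.f b s(a, b) ((G.mem_edgeSet).mpr (hle h)) (Sym2.mem_mk_right a b) (s b)) ∧
      (∀ (y : V) (h : G.Adj x y),
        D.f y s(x, y) ((G.mem_edgeSet).mpr h) (Sym2.mem_mk_right x y) (s y) =
        D.f x s(x, y) ((G.mem_edgeSet).mpr h) (Sym2.mem_mk_left x y) ξ)) := by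
  constructor
  · rintro ⟨s, hs⟩
    refine ⟨s, fun a b h => hs (hle h), fun y h => ?_⟩
    rw [← hsing (s x)]
    exact (hs h).symm
  · rintro ⟨s, hs1, hs2⟩
    refine ⟨s, ?_⟩
    intro a b h
    by_cases ha : a = x
    · subst ha
      rw [hsing (s a)]
      exact (hs2 b h).symm
    · by_cases hb : b = x
      · subst hb
        rw [hsing (s b)]
        exact aux_swap D h.symm ξ (s a) (hs2 a h.symm).symm
      · apply hs1
        rw [hG'def]
        rw [SimpleGraph.deleteEdges_adj]
        refine ⟨h, fun hmem => ?_⟩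
        rcases Sym2.mem_iff.mp hmem.2 with h1 | h1
        · exact ha h1.symm
        · exact hb h1.symm
end

section
/- Let H and G be finite simple graphs, let (T, (X_t)_{t ∈ V(T)}) be a tree decomposition of H, and let (H, (Y_h)_{h ∈ V(H)}) be an H-decomposition of G. Then (T, (Z_t)_{t ∈ V(T)}) with Z_t = ⋃_{h ∈ X_t} Y_h is a tree decomposition of G. Moreover, if every bag X_t has at most a elements and every bag Y_h has at most b elements, then every bag Z_t has at most a · b elements. -/
/-- An `H`-decomposition of `G`: bags indexed by the vertices of `H`, covering all vertices
and edges of `G`, such that for each vertex of `G` the set of bags containing it induces a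
nonempty connected subgraph of `H`. -/
structure GraphDecomp {VH VG : Type*} (H : SimpleGraph VH) (G : SimpleGraph VG) where
  bag : VH → Set VG
  cover_vert : ∀ v : VG, ∃ h, v ∈ bag h
  cover_edge : ∀ ⦃u v : VG⦄, G.Adj u v → ∃ h, u ∈ bag h ∧ v ∈ bag h
  coherent : ∀ v : VG, (H.induce {h : VH | v ∈ bag h}).Connected

/-- Inclusion hom between induced subgraphs. -/
def induceHomOfLE {V : Type*} (G : SimpleGraph V) {A B : Set V} (h : A ⊆ B) :
    G.induce A →g G.induce B :=
  ⟨Set.inclusion h, fun {_ _} hab => hab⟩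

lemma reach_of_subset {V : Type*} (G : SimpleGraph V) {A B : Set V} (h : A ⊆ B)
    {a b : A} (hr : (G.induce A).Reachable a b) :
    (G.induce B).Reachable ⟨a, h a.2⟩ ⟨b, h b.2⟩ :=
  hr.map (induceHomOfLE G h)

/-- Composing a tree decomposition `X` of `H` with an `H`-decomposition `Y` of
`G` by taking unions of bags yields a tree decomposition of `G`, whose bags have at most
`a * b` elements whenever the bags of `X` (resp. `Y`) have at most `a` (resp. `b`) elements. -/
theorem stmt_11 {VT VH VG : Type*} [Fintype VH] [Fintype VG]
    (T : SimpleGraph VT) (hTconn : T.Connected) (hTacyc : T.IsAcyclic)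
    (H : SimpleGraph VH) (G : SimpleGraph VG)
    (X : GraphDecomp T H) (Y : GraphDecomp H G) :
    (∃ Z : GraphDecomp T G, Z.bag = fun t => ⋃ h ∈ X.bag t, Y.bag h) ∧
    ∀ a b : ℕ, (∀ t, (X.bag t).ncard ≤ a) → (∀ h, (Y.bag h).ncard ≤ b) →
      ∀ t, (⋃ h ∈ X.bag t, Y.bag h).ncard ≤ a * b := by
  classical
  constructor
  · refine ⟨⟨fun t => ⋃ h ∈ X.bag t, Y.bag h, ?_, ?_, ?_⟩, rfl⟩
    · intro v
      obtain ⟨h, hv⟩ := Y.cover_vert v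
      obtain ⟨t, ht⟩ := X.cover_vert h
      exact ⟨t, Set.mem_biUnion ht hv⟩
    · intro u v huv
      obtain ⟨h, hu, hv⟩ := Y.cover_edge huv
      obtain ⟨t, ht⟩ := X.cover_vert h
      exact ⟨t, Set.mem_biUnion ht hu, Set.mem_biUnion ht hv⟩
    · intro v
      set Z : Set VT := {t | v ∈ ⋃ h ∈ X.bag t, Y.bag h} with hZ
      have hmem : ∀ {t h}, h ∈ X.bag t → v ∈ Y.bag h → t ∈ Z := by
        intro t h ht hv; exact Set.mem_biUnion ht hv
      -- for a fixed h with v ∈ Y.bag h, bags of X containing h are reachable in induce Z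
      have key : ∀ (h : VH) (hv : v ∈ Y.bag h), ∀ t t' (ht : h ∈ X.bag t) (ht' : h ∈ X.bag t'),
          (T.induce Z).Reachable ⟨t, hmem ht hv⟩ ⟨t', hmem ht' hv⟩ := by
        intro h hv t t' ht ht'
        have hsub : {s : VT | h ∈ X.bag s} ⊆ Z := fun s hs => hmem hs hv
        have := (X.coherent h).preconnected ⟨t, ht⟩ ⟨t', ht'⟩
        exact reach_of_subset T hsub this
      have hS := Y.coherent v
      rw [SimpleGraph.connected_iff]
      constructor
      · rintro ⟨t1, hv1⟩ ⟨t2, hv2⟩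
        obtain ⟨h1, ht1, hy1⟩ : ∃ h ∈ X.bag t1, v ∈ Y.bag h := by
          simpa [hZ] using hv1
        obtain ⟨h2, ht2, hy2⟩ : ∃ h ∈ X.bag t2, v ∈ Y.bag h := by
          simpa [hZ] using hv2
        have claim : ∀ (a b : {h : VH | v ∈ Y.bag h})
            (w : (H.induce {h : VH | v ∈ Y.bag h}).Walk a b)
            (s s' : VT) (hs : a.val ∈ X.bag s) (hs' : b.val ∈ X.bag s'),
            (T.induce Z).Reachable ⟨s, hmem hs a.2⟩ ⟨s', hmem hs' b.2⟩ := by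
          intro a b w
          induction w with
          | @nil u =>
            intro s s' hs hs'
            exact key u.val u.2 s s' hs hs'
          | @cons a c b hac w ih =>
            intro s s' hs hs'
            obtain ⟨t3, ha3, hc3⟩ := X.cover_edge hac
            exact (key a.val a.2 s t3 hs ha3).trans (ih t3 s' hc3 hs')
        obtain ⟨w⟩ := hS.preconnected ⟨h1, hy1⟩ ⟨h2, hy2⟩
        exact claim ⟨h1, hy1⟩ ⟨h2, hy2⟩ w t1 t2 ht1 ht2
      · obtain ⟨h, hv⟩ := Y.cover_vert v
        obtain ⟨t, ht⟩ := X.cover_vert h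
        exact ⟨⟨t, hmem ht hv⟩⟩
  · intro a b ha hb t
    have : (⋃ h ∈ X.bag t, Y.bag h) =
        ↑((X.bag t).toFinset.biUnion fun h => (Y.bag h).toFinset) := by
      ext x
      simp [Set.mem_iUnion]
    rw [this, Set.ncard_coe_finset]
    calc ((X.bag t).toFinset.biUnion fun h => (Y.bag h).toFinset).card
        ≤ (X.bag t).toFinset.card * b :=
          Finset.card_biUnion_le_card_mul _ _ _ fun h _ => by
            simpa [Set.ncard_eq_toFinset_card'] using hb h
      _ ≤ a * b := Nat.mul_le_mul_right b (by simpa [Set.ncard_eq_toFinset_card'] using ha t)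
end

section
/- Let G be a finite simple graph and let S be a feedback vertex set of G, i.e. a set of vertices such that the induced subgraph of G on the complement of S is acyclic. Then G admits a tree decomposition in which every bag has at most |S| + 2 vertices. -/
namespace Stmt13

open SimpleGraph Walk

/-- A graph whose edges are given by a parent map with strictly decreasing rank,
with a unique root, is a tree. -/
theorem parent_tree {X : Type} (T : SimpleGraph X) (π : X → X) (f : X → ℕ) (r : X)
    (h1 : ∀ x, π x ≠ x → T.Adj x (π x))
    (h2 : ∀ x y, T.Adj x y → π x = y ∨ π y = x)
    (h3 : ∀ x, π x ≠ x → f (π x) < f x)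
    (h4 : ∀ x, π x = x → x = r) :
    T.Connected ∧ T.IsAcyclic := by
  classical
  have hreach : ∀ x, T.Reachable x r := by
    have : ∀ (n : ℕ) (x : X), f x ≤ n → T.Reachable x r := by
      intro n
      induction n using Nat.strong_induction_on with
      | _ n ih =>
        intro x hx
        by_cases hx' : π x = x
        · rw [h4 x hx']
        · exact (h1 x hx').reachable.trans
            (ih (f (π x)) (lt_of_lt_of_le (h3 x hx') hx) _ le_rfl)
    exact fun x => this (f x) x le_rfl
  haveI : Nonempty X := ⟨r⟩
  refine ⟨⟨fun a b => (hreach a).trans (hreach b).symm⟩, ?_⟩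

  -- last-edge lemma
  have L : ∀ (m x : X) (w : T.Walk x m), ¬w.Nil → (∀ y ∈ w.support, f y ≤ f m) →
      s(m, π m) ∈ w.edges := by
    intro m x w
    induction w with
    | nil => intro h; simp at h
    | @cons x y m h w ih =>
      intro _ hsup
      by_cases hw : w.Nil
      · have hym : y = m := hw.eq
        subst hym
        rcases h2 _ _ h with hxy | hxy
        · exfalso
          have hne : π x ≠ x := by rw [hxy]; exact fun he => h.ne he.symm
          have := h3 x hne
          rw [hxy] at this
          have := hsup x (by simp)
          omega
        · simp only [Walk.edges_cons, List.mem_cons]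
          left
          rw [← hxy, Sym2.eq_swap]
      · have := ih hw (fun z hz => hsup z (by simp [Walk.support_cons]; right; exact hz))
        exact List.mem_cons_of_mem _ this
  have key : ∀ (m : X) (p : T.Walk m m), p.IsCycle → (∀ y ∈ p.support, f y ≤ f m) → False := by
    intro m p hp hmax
    obtain ⟨b, hab, q, rfl⟩ := Walk.not_nil_iff.mp hp.not_nil
    have hqnil : ¬q.Nil := by
      intro hq
      exact hab.ne hq.eq.symm
    have hb : π m = b := by
      rcases h2 _ _ hab with h' | h'
      · exact h'
      · exfalso
        have hne : π b ≠ b := by rw [h']; exact hab.ne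
        have := h3 b hne
        rw [h'] at this
        have := hmax b (by simp [Walk.support_cons])
        omega
    have hmem := L m b q hqnil (fun z hz => hmax z (by simp [Walk.support_cons]; right; exact hz))
    rw [hb] at hmem
    have htrail : (Walk.cons hab q).IsTrail := ((Walk.isCycle_def _).mp hp).1
    have hnodup := htrail.edges_nodup
    rw [Walk.edges_cons] at hnodup
    exact (List.nodup_cons.mp hnodup).1 hmem
  intro a c hc
  have hne : c.support ≠ [] := c.support_ne_nil
  obtain ⟨m, hm, hmax⟩ : ∃ m ∈ c.support, ∀ y ∈ c.support, f y ≤ f m := by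
    classical
    obtain ⟨m, hm1, hm2⟩ := c.support.toFinset.exists_max_image f
      (by simpa [List.toFinset_eq_empty_iff] using hne)
    exact ⟨m, by simpa using hm1, fun y hy => hm2 y (by simpa using hy)⟩
  have hrot : (c.rotate m hm).IsCycle := hc.rotate hm
  refine key m (c.rotate m hm) hrot ?_
  intro y hy
  rw [Walk.support_eq_cons (c.rotate m hm)] at hy
  rcases List.mem_cons.mp hy with rfl | hy
  · exact le_refl _
  · have := (Walk.support_rotate c m hm).mem_iff.mp hy
    exact hmax y (List.mem_of_mem_tail this)


variable {W : Type} (F : SimpleGraph W)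

/-- A chosen root in each connected component. -/
noncomputable def rt (w : W) : W := (F.connectedComponentMk w).out

lemma reachable_rt (w : W) : F.Reachable w (rt F w) :=
  (ConnectedComponent.exact (Quot.out_eq _)).symm

lemma rt_eq_of_reachable {a b : W} (h : F.Reachable a b) : rt F a = rt F b := by
  unfold rt
  rw [ConnectedComponent.sound h]

open scoped Classical in
/-- The chosen path from a vertex to the root of its component. -/
noncomputable def pr (w : W) : F.Path w (rt F w) := ((reachable_rt F w).some).toPath

/-- Rank: distance to root along the chosen path. -/
noncomputable def rnk (w : W) : ℕ := (pr F w).1.length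

open scoped Classical in
/-- Parent of a vertex: the next vertex on the path to the root, if any. -/
noncomputable def par (w : W) : Option W :=
  if h : ((pr F w).1 : F.Walk w (rt F w)).Nil then none else some ((pr F w).1.getVert 1)

lemma adj_par {w u : W} (h : par F w = some u) : F.Adj w u := by
  classical
  unfold par at h
  split at h
  · exact absurd h (by simp)
  · next hnil =>
    have hu : u = (pr F w).1.getVert 1 := (Option.some.inj h).symm
    rw [hu]
    exact Walk.adj_snd hnil

/-- Parent map on `Option W`; `none` is the global root. -/
noncomputable def pi' : Option W → Option W := fun x => x.bind (par F)

/-- Rank on `Option W`. -/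
noncomputable def rnk' : Option W → ℕ := fun x => x.elim 0 (fun w => rnk F w + 1)

/-- The decomposition tree. -/
noncomputable def T : SimpleGraph (Option W) where
  Adj x y := x ≠ y ∧ (pi' F x = y ∨ pi' F y = x)
  symm := ⟨fun x y h => ⟨h.1.symm, h.2.symm⟩⟩
  loopless := ⟨fun x h => h.1 rfl⟩

lemma T_adj {x y : Option W} : (T F).Adj x y ↔ x ≠ y ∧ (pi' F x = y ∨ pi' F y = x) :=
  Iff.rfl

variable {F}
variable (hF : F.IsAcyclic)
include hF

lemma rnk_par {w u : W} (h : par F w = some u) : rnk F u < rnk F w := by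
  classical
  have hadj := adj_par F h
  unfold par at h
  split at h
  · exact absurd h (by simp)
  · next hnil =>
    have hu : (pr F w).1.getVert 1 = u := Option.some.inj h
    have hrt : rt F u = rt F w := rt_eq_of_reachable F hadj.symm.reachable
    have htail : ((pr F w).1.tail).IsPath := (pr F w).2.tail
    have hq : (((pr F w).1.tail).copy hu hrt.symm).IsPath := by
      rw [Walk.isPath_copy]; exact htail
    have hup := hF.path_unique (pr F u) ⟨_, hq⟩
    have hlen : rnk F u = ((pr F w).1.tail).length := by
      unfold rnk
      rw [hup]
      simp [Walk.length_copy]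
    have := Walk.length_tail_add_one hnil
    rw [hlen]
    unfold rnk
    omega

lemma par_ne_self (w : W) : par F w ≠ some w := fun h => lt_irrefl _ (rnk_par hF h)

lemma par_adj {a b : W} (hab : F.Adj a b) : par F a = some b ∨ par F b = some a := by
  classical
  have main : ∀ a b : W, F.Adj a b → rnk F b ≤ rnk F a → par F a = some b := by
    intro a b hab hle
    have hrt : rt F a = rt F b := rt_eq_of_reachable F hab.reachable
    have ha_not : a ∉ (pr F b).1.support := by
      intro ha
      have hd : ((pr F b).1.dropUntil a ha).IsPath := (pr F b).2.dropUntil ha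
      have hq : (((pr F b).1.dropUntil a ha).copy rfl hrt.symm).IsPath := by
        rw [Walk.isPath_copy]; exact hd
      have hup := hF.path_unique (pr F a) ⟨_, hq⟩
      have hlen : rnk F a = ((pr F b).1.dropUntil a ha).length := by
        unfold rnk; rw [hup]; simp [Walk.length_copy]
      have hsum : ((pr F b).1.takeUntil a ha).length + ((pr F b).1.dropUntil a ha).length
          = rnk F b := by
        unfold rnk
        rw [← congrArg Walk.length ((pr F b).1.take_spec ha), Walk.length_append]
      have htk : 0 < ((pr F b).1.takeUntil a ha).length := by
        rw [← Walk.not_nil_iff_lt_length]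
        exact Walk.not_nil_of_ne (fun h => hab.ne h.symm)
      omega
    have hC : (Walk.cons hab (pr F b).1).IsPath := by
      rw [Walk.cons_isPath_iff]; exact ⟨(pr F b).2, ha_not⟩
    have hq : ((Walk.cons hab (pr F b).1).copy rfl hrt.symm).IsPath := by
      rw [Walk.isPath_copy]; exact hC
    have hup := hF.path_unique (pr F a) ⟨_, hq⟩
    unfold par
    rw [hup]
    split
    · next hnil =>
      exfalso
      rw [Walk.nil_iff_length_eq] at hnil
      simp [Walk.length_copy] at hnil
    · next hnil =>
      simp
  rcases le_total (rnk F b) (rnk F a) with h | h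
  · exact Or.inl (main a b hab h)
  · exact Or.inr (main b a hab.symm h)

lemma T_props : (T F).Connected ∧ (T F).IsAcyclic := by
  refine parent_tree (T F) (pi' F) (rnk' F) none ?_ (fun x y h => h.2) ?_ ?_
  · intro x hx
    exact ⟨fun he => hx he.symm, Or.inl rfl⟩
  · intro x hx
    match x with
    | none => exact absurd rfl hx
    | some w =>
      cases h : par F w with
      | none => simp [pi', rnk', h]
      | some u =>
        have := rnk_par hF h
        simp only [pi', Option.bind, rnk', h, Option.elim]
        omega
  · intro x hx
    match x with
    | none => rfl
    | some w => exact absurd hx (par_ne_self hF w)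

omit hF in
/-- The bags of the decomposition. -/
noncomputable def bagF {V : Type} (S : Set V) (F : SimpleGraph ↥(Sᶜ)) :
    Option ↥(Sᶜ) → Set V
  | none => S
  | some w => insert (w : V) ((par F w).elim S (fun u => insert (u : V) S))

end Stmt13

/-- If `S` is a feedback vertex set of a finite simple graph `G` (the induced
subgraph on the complement of `S` is acyclic), then `G` admits a tree decomposition all of
whose bags have at most `|S| + 2` vertices. -/
theorem stmt_13 {V : Type} [Fintype V] (G : SimpleGraph V) (S : Set V)
    (hS : (G.induce Sᶜ).IsAcyclic) :
    ∃ (VT : Type) (T : SimpleGraph VT), T.Connected ∧ T.IsAcyclic ∧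
      ∃ D : GraphDecomp T G, ∀ t, (D.bag t).ncard ≤ S.ncard + 2 := by
  classical
  set F : SimpleGraph ↥(Sᶜ) := G.induce Sᶜ with hFdef
  obtain ⟨hTconn, hTacyc⟩ := Stmt13.T_props (F := F) hS
  refine ⟨Option ↥(Sᶜ), Stmt13.T F, hTconn, hTacyc, ?_⟩
  have hSsub : ∀ x, S ⊆ Stmt13.bagF S F x := by
    intro x
    cases x with
    | none => exact subset_rfl
    | some w =>
      cases h : Stmt13.par F w with
      | none =>
        simp only [Stmt13.bagF, h, Option.elim]
        exact Set.subset_insert _ _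
      | some u =>
        simp only [Stmt13.bagF, h, Option.elim]
        exact subset_trans (Set.subset_insert _ _) (Set.subset_insert _ _)
  have hmem : ∀ w : ↥(Sᶜ), (w : V) ∈ Stmt13.bagF S F (some w) := by
    intro w; exact Set.mem_insert _ _
  have hparmem : ∀ {w u : ↥(Sᶜ)}, Stmt13.par F w = some u →
      (u : V) ∈ Stmt13.bagF S F (some w) := by
    intro w u h
    simp only [Stmt13.bagF, h, Option.elim]
    exact Set.mem_insert_iff.mpr (Or.inr (Set.mem_insert _ _))
  refine ⟨⟨Stmt13.bagF S F, ?_, ?_, ?_⟩, ?_⟩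
  · -- cover_vert
    intro v
    by_cases hv : v ∈ S
    · exact ⟨none, hv⟩
    · exact ⟨some ⟨v, hv⟩, hmem _⟩
  · -- cover_edge
    intro u v huv
    by_cases hu : u ∈ S
    · by_cases hv : v ∈ S
      · exact ⟨none, hu, hv⟩
      · exact ⟨some ⟨v, hv⟩, hSsub _ hu, hmem _⟩
    · by_cases hv : v ∈ S
      · exact ⟨some ⟨u, hu⟩, hmem _, hSsub _ hv⟩
      · have hadj : F.Adj ⟨u, hu⟩ ⟨v, hv⟩ := huv
        rcases Stmt13.par_adj hS hadj with h | h
        · exact ⟨some ⟨u, hu⟩, hmem _, hparmem h⟩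
        · exact ⟨some ⟨v, hv⟩, hparmem h, hmem _⟩
  · -- coherent
    intro v
    by_cases hv : v ∈ S
    · have huniv : {h : Option ↥(Sᶜ) | v ∈ Stmt13.bagF S F h} = Set.univ :=
        Set.eq_univ_of_forall (fun x => hSsub x hv)
      rw [huniv]
      exact (SimpleGraph.induceUnivIso (Stmt13.T F)).connected_iff.mpr hTconn
    · set N := {h : Option ↥(Sᶜ) | v ∈ Stmt13.bagF S F h} with hN
      have hcN : some (⟨v, hv⟩ : ↥(Sᶜ)) ∈ N := hmem ⟨v, hv⟩
      have hchar : ∀ x ∈ N, x = some (⟨v, hv⟩ : ↥(Sᶜ)) ∨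
          (Stmt13.T F).Adj x (some ⟨v, hv⟩) := by
        intro x hx
        cases x with
        | none => exact absurd hx hv
        | some w =>
          rcases Set.mem_insert_iff.mp hx with h | h
          · left
            congr 1
            exact Subtype.ext h.symm
          · cases hp : Stmt13.par F w with
            | none =>
              rw [hp] at h
              exact absurd h hv
            | some u =>
              rw [hp] at h
              rcases Set.mem_insert_iff.mp h with h | h
              · have hu : u = ⟨v, hv⟩ := Subtype.ext h.symm
                subst hu
                right
                refine ⟨?_, Or.inl ?_⟩
                · intro he
                  rw [← Option.some.inj he] at hp
                  exact Stmt13.par_ne_self hS w hp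
                · simpa [Stmt13.pi'] using hp
              · exact absurd h hv
      have hreach : ∀ a : ↥N, ((Stmt13.T F).induce N).Reachable a ⟨_, hcN⟩ := by
        rintro ⟨x, hx⟩
        rcases hchar x hx with h | h
        · rw [show (⟨x, hx⟩ : ↥N) = ⟨_, hcN⟩ from Subtype.ext h]
        · exact (SimpleGraph.Adj.reachable (by exact h))
      haveI : Nonempty ↥N := ⟨⟨_, hcN⟩⟩
      exact ⟨fun a b => (hreach a).trans (hreach b).symm⟩
  · -- bag sizes
    intro t
    cases t with
    | none => exact Nat.le_add_right _ _
    | some w =>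
      cases h : Stmt13.par F w with
      | none =>
        simp only [Stmt13.bagF, h, Option.elim]
        exact le_trans (Set.ncard_insert_le _ _) (by omega)
      | some u =>
        simp only [Stmt13.bagF, h, Option.elim]
        exact le_trans (Set.ncard_insert_le _ _)
          (by have := Set.ncard_insert_le (u : V) S; omega)
end
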